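/- arXiv:2605.05601 — 3 statements merged into one kernel-verified Lean document; each statement's English description precedes it below -/
import Mathlib

section
/- In a delta-matroid D, every feasible set X is sandwiched between a minimum and a maximum feasible set: there exist A ∈ F_min(D) and B ∈ F_max(D) with A ⊆ X ⊆ B. -/
/-- The Symmetric Exchange Axiom for a set system. -/
def SEA {α : Type*} [DecidableEq α] (𝓕 : Finset (Finset α)) : Prop :=
  ∀ X ∈ 𝓕, ∀ Y ∈ 𝓕, ∀ u ∈ symmDiff X Y, ∃ v ∈ symmDiff X Y,
    symmDiff X ({u, v} : Finset α) ∈ 𝓕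

/-- Minimum cardinality of a feasible set. -/
noncomputable def rmin {α : Type*} (𝓕 : Finset (Finset α)) : ℕ :=
  sInf {n | ∃ F ∈ 𝓕, F.card = n}

/-- Maximum cardinality of a feasible set. -/
def rmax {α : Type*} (𝓕 : Finset (Finset α)) : ℕ := 𝓕.sup Finset.card


lemma rmin_le {α : Type*} {𝓕 : Finset (Finset α)} {F : Finset α} (hF : F ∈ 𝓕) :
    rmin 𝓕 ≤ F.card := Nat.sInf_le ⟨F, hF, rfl⟩

lemma le_rmax {α : Type*} {𝓕 : Finset (Finset α)} {F : Finset α} (hF : F ∈ 𝓕) :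
    F.card ≤ rmax 𝓕 := Finset.le_sup hF

lemma symm_pair_eq {α : Type*} [DecidableEq α] {Y : Finset α} {u v : α}
    (huY : u ∈ Y) (hvY : v ∉ Y) :
    symmDiff Y ({u, v} : Finset α) = insert v (Y.erase u) := by
  ext a
  simp only [Finset.mem_symmDiff, Finset.mem_insert, Finset.mem_erase, Finset.mem_singleton]
  constructor
  · rintro (⟨ha, h2⟩ | ⟨(rfl | rfl), h2⟩)
    · exact Or.inr ⟨fun h => h2 (Or.inl h), ha⟩
    · exact absurd huY h2
    · exact Or.inl rfl
  · rintro (rfl | ⟨hne, ha⟩)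
    · exact Or.inr ⟨Or.inr rfl, hvY⟩
    · exact Or.inl ⟨ha, by rintro (rfl | rfl); exacts [hne rfl, hvY ha]⟩

lemma min_subset {α : Type*} [DecidableEq α] {𝓕 : Finset (Finset α)} (hSEA : SEA 𝓕)
    {X : Finset α} (hX : X ∈ 𝓕) :
    ∀ n (Y : Finset α), Y ∈ 𝓕 → Y.card = rmin 𝓕 → (Y \ X).card = n →
      ∃ A ∈ 𝓕, A.card = rmin 𝓕 ∧ A ⊆ X := by
  intro n
  induction n using Nat.strong_induction_on with
  | _ n ih =>
    intro Y hY hYcard hYX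
    by_cases hsub : Y ⊆ X
    · exact ⟨Y, hY, hYcard, hsub⟩
    · obtain ⟨u, huY, huX⟩ := Finset.not_subset.mp hsub
      have humem : u ∈ symmDiff Y X := Finset.mem_symmDiff.mpr (Or.inl ⟨huY, huX⟩)
      obtain ⟨v, hv, hY'⟩ := hSEA Y hY X hX u humem
      rcases Finset.mem_symmDiff.mp hv with ⟨hvY, hvX⟩ | ⟨hvX, hvY⟩
      · exfalso
        have hss : symmDiff Y ({u, v} : Finset α) ⊂ Y := by
          constructor
          · intro a ha
            rcases Finset.mem_symmDiff.mp ha with ⟨h1, _⟩ | ⟨h1, h2⟩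
            · exact h1
            · rcases Finset.mem_insert.mp h1 with rfl | h1
              · exact absurd huY h2
              · exact absurd ((Finset.mem_singleton.mp h1) ▸ hvY) h2
          · intro h
            have := Finset.mem_symmDiff.mp (h huY)
            simp at this
            exact this huY
        exact absurd (rmin_le hY') (by
          have := Finset.card_lt_card hss
          omega)
      · -- v ∈ X, v ∉ Y
        have hvu : v ≠ u := fun h => huX (h ▸ hvX)
        have heq : symmDiff Y ({u, v} : Finset α) = insert v (Y.erase u) :=
          symm_pair_eq huY hvY
        rw [heq] at hY'
        have hcard : (insert v (Y.erase u)).card = rmin 𝓕 := by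
          rw [Finset.card_insert_of_notMem (fun h => hvY (Finset.mem_of_mem_erase h)),
            Finset.card_erase_of_mem huY]
          have : 0 < Y.card := Finset.card_pos.mpr ⟨u, huY⟩
          omega
        have hsd : insert v (Y.erase u) \ X = (Y \ X).erase u := by
          ext a
          simp only [Finset.mem_sdiff, Finset.mem_insert, Finset.mem_erase]
          constructor
          · rintro ⟨rfl | ⟨hne, ha⟩, hax⟩
            · exact absurd hvX hax
            · exact ⟨hne, ha, hax⟩
          · rintro ⟨hne, ha, hax⟩
            exact ⟨Or.inr ⟨hne, ha⟩, hax⟩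
        have hmem : u ∈ Y \ X := Finset.mem_sdiff.mpr ⟨huY, huX⟩
        have hlt : ((Y \ X).erase u).card < n := by
          rw [Finset.card_erase_of_mem hmem, hYX]
          have : 0 < (Y \ X).card := Finset.card_pos.mpr ⟨u, hmem⟩
          omega
        exact ih _ hlt _ hY' hcard (by rw [hsd])

example : True := trivial

lemma max_superset {α : Type*} [DecidableEq α] {𝓕 : Finset (Finset α)} (hSEA : SEA 𝓕)
    {X : Finset α} (hX : X ∈ 𝓕) :
    ∀ n (Y : Finset α), Y ∈ 𝓕 → Y.card = rmax 𝓕 → (X \ Y).card = n →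
      ∃ B ∈ 𝓕, B.card = rmax 𝓕 ∧ X ⊆ B := by
  intro n
  induction n using Nat.strong_induction_on with
  | _ n ih =>
    intro Y hY hYcard hXY
    by_cases hsub : X ⊆ Y
    · exact ⟨Y, hY, hYcard, hsub⟩
    · obtain ⟨u, huX, huY⟩ := Finset.not_subset.mp hsub
      have humem : u ∈ symmDiff Y X := Finset.mem_symmDiff.mpr (Or.inr ⟨huX, huY⟩)
      obtain ⟨v, hv, hY'⟩ := hSEA Y hY X hX u humem
      rcases Finset.mem_symmDiff.mp hv with ⟨hvY, hvX⟩ | ⟨hvX, hvY⟩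
      · -- v ∈ Y, v ∉ X : shift
        have hvu : v ≠ u := fun h => huY (h ▸ hvY)
        have heq : symmDiff Y ({u, v} : Finset α) = insert u (Y.erase v) := by
          rw [Finset.pair_comm]; exact symm_pair_eq hvY huY
        rw [heq] at hY'
        have hcard : (insert u (Y.erase v)).card = rmax 𝓕 := by
          rw [Finset.card_insert_of_notMem (fun h => huY (Finset.mem_of_mem_erase h)),
            Finset.card_erase_of_mem hvY]
          have : 0 < Y.card := Finset.card_pos.mpr ⟨v, hvY⟩
          omega
        have hsd : X \ insert u (Y.erase v) = (X \ Y).erase u := by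
          ext a
          simp only [Finset.mem_sdiff, Finset.mem_insert, Finset.mem_erase, not_or]
          constructor
          · rintro ⟨hax, hne, h⟩
            refine ⟨hne, hax, fun haY => h ⟨fun h' => hvX (h' ▸ hax), haY⟩⟩
          · rintro ⟨hne, hax, haY⟩
            exact ⟨hax, hne, fun h => haY h.2⟩
        have hmem : u ∈ X \ Y := Finset.mem_sdiff.mpr ⟨huX, huY⟩
        have hlt : ((X \ Y).erase u).card < n := by
          rw [Finset.card_erase_of_mem hmem, hXY]
          have : 0 < (X \ Y).card := Finset.card_pos.mpr ⟨u, hmem⟩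
          omega
        exact ih _ hlt _ hY' hcard (by rw [hsd])
      · -- v ∈ X, v ∉ Y : strict superset, contradiction
        exfalso
        have hss : Y ⊂ symmDiff Y ({u, v} : Finset α) := by
          constructor
          · intro a ha
            refine Finset.mem_symmDiff.mpr (Or.inl ⟨ha, ?_⟩)
            rintro h
            rcases Finset.mem_insert.mp h with rfl | h
            · exact huY ha
            · exact hvY (Finset.mem_singleton.mp h ▸ ha)
          · intro h
            exact huY (h (Finset.mem_symmDiff.mpr
              (Or.inr ⟨Finset.mem_insert_self u {v}, huY⟩)))
        have := Finset.card_lt_card hss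
        have := le_rmax hY'
        omega

/-- Every feasible set of a delta-matroid is sandwiched between a minimum
and a maximum feasible set. -/
theorem feasible_sandwich {α : Type*} [DecidableEq α] (𝓕 : Finset (Finset α))
    (hne : 𝓕.Nonempty) (hSEA : SEA 𝓕) (X : Finset α) (hX : X ∈ 𝓕) :
    ∃ A ∈ 𝓕, ∃ B ∈ 𝓕, A.card = rmin 𝓕 ∧ B.card = rmax 𝓕 ∧ A ⊆ X ∧ X ⊆ B := by
  obtain ⟨Y, hY, hYc⟩ : ∃ Y ∈ 𝓕, Y.card = rmin 𝓕 := by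
    obtain ⟨F, hFm, hFc⟩ := Nat.sInf_mem (⟨X.card, X, hX, rfl⟩ :
      {n | ∃ F ∈ 𝓕, F.card = n}.Nonempty)
    exact ⟨F, hFm, hFc⟩
  obtain ⟨Z, hZ, hZc⟩ : ∃ Z ∈ 𝓕, Z.card = rmax 𝓕 := by
    obtain ⟨Z, hZ, h⟩ := Finset.exists_mem_eq_sup 𝓕 hne Finset.card
    exact ⟨Z, hZ, h.symm⟩
  obtain ⟨A, hA, hAc, hAX⟩ := min_subset hSEA hX _ Y hY hYc rfl
  obtain ⟨B, hB, hBc, hXB⟩ := max_superset hSEA hX _ Z hZ hZc rfl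
  exact ⟨A, hA, B, hB, hAc, hBc, hAX, hXB⟩
end

section
/- Deleting an element preserves the primal type of other elements in a delta-matroid: for a delta-matroid D = (E, F) and distinct elements e₁, e₂ ∈ E, the primal type (p, u, or t) of e₂ in D − e₁ equals its primal type in D. -/
/-- Primal type `p`: `e` lies in some minimum-cardinality feasible set. -/
noncomputable def typeP {α : Type*} (𝓕 : Finset (Finset α)) (e : α) : Prop :=
  ∃ F ∈ 𝓕, F.card = rmin 𝓕 ∧ e ∈ F

/-- Primal type `u`: `e` lies in no feasible set of cardinality
`rmin 𝓕` or `rmin 𝓕 + 1`. -/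
noncomputable def typeU {α : Type*} (𝓕 : Finset (Finset α)) (e : α) : Prop :=
  ∀ F ∈ 𝓕, (F.card = rmin 𝓕 ∨ F.card = rmin 𝓕 + 1) → e ∉ F

/-- Primal type `t`: `e` lies in no minimum feasible set, but lies in some
feasible set of cardinality `rmin 𝓕 + 1`. -/
noncomputable def typeT {α : Type*} (𝓕 : Finset (Finset α)) (e : α) : Prop :=
  (∀ F ∈ 𝓕, F.card = rmin 𝓕 → e ∉ F) ∧ ∃ F ∈ 𝓕, F.card = rmin 𝓕 + 1 ∧ e ∈ F

/-- Deletion of a single element from a set system. -/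
def delSys {α : Type*} [DecidableEq α] (𝓕 : Finset (Finset α)) (e : α) :
    Finset (Finset α) :=
  if ∀ F ∈ 𝓕, e ∈ F then 𝓕.image (fun F => F.erase e)
  else 𝓕.filter (fun F => e ∉ F)

lemma rmin_mem {α : Type*} {𝓕 : Finset (Finset α)} (h : 𝓕.Nonempty) :
    ∃ F ∈ 𝓕, F.card = rmin 𝓕 := by
  obtain ⟨F, hF⟩ := h
  have : rmin 𝓕 ∈ {n | ∃ F ∈ 𝓕, F.card = n} := Nat.sInf_mem ⟨F.card, F, hF, rfl⟩
  exact this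

lemma exchange {α : Type*} [DecidableEq α] {𝓕 : Finset (Finset α)} (hSEA : SEA 𝓕)
    {X₀ F : Finset α} {e : α} (hX₀ : X₀ ∈ 𝓕) (heX : e ∉ X₀) (hF : F ∈ 𝓕) (heF : e ∈ F) :
    ∃ G ∈ 𝓕, e ∉ G ∧ ((F.erase e ⊆ G ∧ (G.card = F.card ∨ G.card + 1 = F.card))
      ∨ G.card + 2 = F.card) := by
  have hu : e ∈ symmDiff F X₀ := by simp [Finset.mem_symmDiff, heF, heX]
  obtain ⟨v, hv, hG⟩ := hSEA F hF X₀ hX₀ e hu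
  rw [Finset.mem_symmDiff] at hv
  by_cases hve : v = e
  · subst hve
    have hcomp : symmDiff F ({v, v} : Finset α) = F.erase v := by
      ext x
      simp only [Finset.mem_symmDiff, Finset.mem_insert, Finset.mem_singleton,
        Finset.mem_erase, or_self]
      rcases eq_or_ne x v with rfl | hxv <;> simp_all
    rw [hcomp] at hG
    exact ⟨F.erase v, hG, by simp, Or.inl ⟨subset_rfl, Or.inr (Finset.card_erase_add_one heF)⟩⟩
  · by_cases hvF : v ∈ F
    · have hcomp : symmDiff F ({e, v} : Finset α) = (F.erase e).erase v := by
        ext x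
        simp only [Finset.mem_symmDiff, Finset.mem_insert, Finset.mem_singleton,
          Finset.mem_erase]
        rcases eq_or_ne x v with rfl | hxv <;> rcases eq_or_ne x e with rfl | hxe <;> simp_all
      rw [hcomp] at hG
      refine ⟨_, hG, by simp [hve], Or.inr ?_⟩
      have h1 : (F.erase e).card + 1 = F.card := Finset.card_erase_add_one heF
      have h2 : ((F.erase e).erase v).card + 1 = (F.erase e).card :=
        Finset.card_erase_add_one (Finset.mem_erase.2 ⟨hve, hvF⟩)
      omega
    · have hvX : v ∈ X₀ := by tauto
      have hcomp : symmDiff F ({e, v} : Finset α) = insert v (F.erase e) := by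
        ext x
        simp only [Finset.mem_symmDiff, Finset.mem_insert, Finset.mem_singleton,
          Finset.mem_erase]
        rcases eq_or_ne x v with rfl | hxv <;> rcases eq_or_ne x e with rfl | hxe <;> simp_all
      rw [hcomp] at hG
      refine ⟨_, hG, ?_, Or.inl ⟨Finset.subset_insert _ _, Or.inl ?_⟩⟩
      · intro h
        rcases Finset.mem_insert.1 h with rfl | h2
        · exact hve rfl
        · exact (Finset.mem_erase.1 h2).1 rfl
      · have h1 : (F.erase e).card + 1 = F.card := Finset.card_erase_add_one heF
        have h2 : v ∉ F.erase e := fun h => hvF (Finset.mem_of_mem_erase h)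
        rw [Finset.card_insert_of_notMem h2]
        omega

lemma exchange' {α : Type*} [DecidableEq α] {𝓕 : Finset (Finset α)} (hSEA : SEA 𝓕)
    {X₀ F : Finset α} {e : α} (hX₀ : X₀ ∈ 𝓕) (heX : e ∉ X₀) (hF : F ∈ 𝓕) (heF : e ∈ F)
    (hcard : F.card ≤ rmin 𝓕 + 1) :
    ∃ G ∈ 𝓕, e ∉ G ∧ F.erase e ⊆ G ∧
      (G.card = F.card ∨ (G.card + 1 = F.card ∧ F.card = rmin 𝓕 + 1)) := by
  obtain ⟨G, hG, heG, h⟩ := exchange hSEA hX₀ heX hF heF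
  rcases h with ⟨hsub, hc | hc⟩ | hc
  · exact ⟨G, hG, heG, hsub, Or.inl hc⟩
  · have := rmin_le hG
    exact ⟨G, hG, heG, hsub, Or.inr ⟨hc, by omega⟩⟩
  · have := rmin_le hG
    exact absurd hcard (by omega)

/-- Deleting an element preserves the primal type of the other elements
in a delta-matroid. -/
theorem del_preserves_primal_type {α : Type*} [DecidableEq α] (𝓕 : Finset (Finset α))
    (hne : 𝓕.Nonempty) (hSEA : SEA 𝓕) (e₁ e₂ : α) (h12 : e₁ ≠ e₂) :
    (typeP (delSys 𝓕 e₁) e₂ ↔ typeP 𝓕 e₂) ∧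
    (typeU (delSys 𝓕 e₁) e₂ ↔ typeU 𝓕 e₂) ∧
    (typeT (delSys 𝓕 e₁) e₂ ↔ typeT 𝓕 e₂) := by
  classical
  by_cases hall : ∀ F ∈ 𝓕, e₁ ∈ F
  · have hdel : delSys 𝓕 e₁ = 𝓕.image (fun F => F.erase e₁) := by
      unfold delSys; rw [if_pos hall]
    rw [hdel]
    set D := 𝓕.image (fun F => F.erase e₁) with hD
    have hDne : D.Nonempty := hne.image _
    have hmem : ∀ G, G ∈ D ↔ ∃ F ∈ 𝓕, F.erase e₁ = G := fun G => Finset.mem_image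
    have hrm : rmin D + 1 = rmin 𝓕 := by
      obtain ⟨F, hF, hFc⟩ := rmin_mem hne
      have h1 : (F.erase e₁).card + 1 = F.card := Finset.card_erase_add_one (hall F hF)
      have h2 : rmin D ≤ (F.erase e₁).card := rmin_le (Finset.mem_image_of_mem _ hF)
      obtain ⟨G, hG, hGc⟩ := rmin_mem hDne
      obtain ⟨F', hF', hF'e⟩ := (hmem G).1 hG
      have h3 : G.card + 1 = F'.card := by
        rw [← hF'e]; exact Finset.card_erase_add_one (hall F' hF')
      have h4 : rmin 𝓕 ≤ F'.card := rmin_le hF'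
      omega
    have he₂ : ∀ F : Finset α, e₂ ∈ F.erase e₁ ↔ e₂ ∈ F := fun F => by
      simp [Finset.mem_erase, Ne.symm h12]
    refine ⟨?_, ?_, ?_⟩
    · constructor
      · rintro ⟨G, hG, hGc, hGe⟩
        obtain ⟨F, hF, rfl⟩ := (hmem G).1 hG
        have := Finset.card_erase_add_one (hall F hF)
        exact ⟨F, hF, by omega, (he₂ F).1 hGe⟩
      · rintro ⟨F, hF, hFc, hFe⟩
        have := Finset.card_erase_add_one (hall F hF)
        exact ⟨F.erase e₁, Finset.mem_image_of_mem _ hF, by omega, (he₂ F).2 hFe⟩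
    · constructor
      · intro hU F hF hc hFe
        have := Finset.card_erase_add_one (hall F hF)
        exact hU (F.erase e₁) (Finset.mem_image_of_mem _ hF) (by omega) ((he₂ F).2 hFe)
      · intro hU G hG hc hGe
        obtain ⟨F, hF, rfl⟩ := (hmem G).1 hG
        have := Finset.card_erase_add_one (hall F hF)
        exact hU F hF (by omega) ((he₂ F).1 hGe)
    · constructor
      · rintro ⟨hT1, G, hG, hGc, hGe⟩
        obtain ⟨F, hF, rfl⟩ := (hmem G).1 hG
        have hc := Finset.card_erase_add_one (hall F hF)
        refine ⟨?_, F, hF, by omega, (he₂ F).1 hGe⟩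
        intro F' hF' hF'c hF'e
        have := Finset.card_erase_add_one (hall F' hF')
        exact hT1 (F'.erase e₁) (Finset.mem_image_of_mem _ hF') (by omega) ((he₂ F').2 hF'e)
      · rintro ⟨hT1, F, hF, hFc, hFe⟩
        have hc := Finset.card_erase_add_one (hall F hF)
        refine ⟨?_, F.erase e₁, Finset.mem_image_of_mem _ hF, by omega, (he₂ F).2 hFe⟩
        intro G hG hGc hGe
        obtain ⟨F', hF', rfl⟩ := (hmem G).1 hG
        have := Finset.card_erase_add_one (hall F' hF')
        exact hT1 F' hF' (by omega) ((he₂ F').1 hGe)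
  · have hdel : delSys 𝓕 e₁ = 𝓕.filter (fun F => e₁ ∉ F) := by
      unfold delSys; rw [if_neg hall]
    rw [hdel]
    push_neg at hall
    obtain ⟨X₀, hX₀, heX₀⟩ := hall
    set D := 𝓕.filter (fun F => e₁ ∉ F) with hD
    have hsub : ∀ G ∈ D, G ∈ 𝓕 := fun G hG => (Finset.mem_filter.1 hG).1
    have hmemD : ∀ G, G ∈ 𝓕 → e₁ ∉ G → G ∈ D := fun G h1 h2 => Finset.mem_filter.2 ⟨h1, h2⟩
    have hDne : D.Nonempty := ⟨X₀, hmemD _ hX₀ heX₀⟩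
    have hrm : rmin D = rmin 𝓕 := by
      obtain ⟨F, hF, hFc⟩ := rmin_mem hne
      have hle : rmin 𝓕 ≤ rmin D := by
        obtain ⟨G, hG, hGc⟩ := rmin_mem hDne
        have := rmin_le (hsub G hG)
        omega
      by_cases he : e₁ ∈ F
      · obtain ⟨G, hG, heG, hsubG, hc⟩ := exchange' hSEA hX₀ heX₀ hF he (by omega)
        have := rmin_le (hmemD G hG heG)
        omega
      · have := rmin_le (hmemD F hF he)
        omega
    have htrans : ∀ F ∈ 𝓕, F.card ≤ rmin 𝓕 + 1 → e₂ ∈ F →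
        ∃ G ∈ D, e₂ ∈ G ∧ (G.card = F.card ∨ (G.card + 1 = F.card ∧ F.card = rmin 𝓕 + 1)) := by
      intro F hF hc he₂F
      by_cases he : e₁ ∈ F
      · obtain ⟨G, hG, heG, hsubG, hcc⟩ := exchange' hSEA hX₀ heX₀ hF he hc
        exact ⟨G, hmemD G hG heG, hsubG (Finset.mem_erase.2 ⟨Ne.symm h12, he₂F⟩), hcc⟩
      · exact ⟨F, hmemD F hF he, he₂F, Or.inl rfl⟩
    refine ⟨?_, ?_, ?_⟩
    · constructor
      · rintro ⟨G, hG, hGc, hGe⟩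
        exact ⟨G, hsub G hG, by omega, hGe⟩
      · rintro ⟨F, hF, hFc, hFe⟩
        obtain ⟨G, hG, hGe, hc⟩ := htrans F hF (by omega) hFe
        have := rmin_le (hsub G hG)
        exact ⟨G, hG, by omega, hGe⟩
    · constructor
      · intro hU F hF hc hFe
        obtain ⟨G, hG, hGe, hcc⟩ := htrans F hF (by omega) hFe
        have := rmin_le (hsub G hG)
        exact hU G hG (by omega) hGe
      · intro hU G hG hc hGe
        exact hU G (hsub G hG) (by omega) hGe
    · constructor
      · rintro ⟨hT1, G, hG, hGc, hGe⟩
        refine ⟨?_, G, hsub G hG, by omega, hGe⟩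
        intro F hF hFc hFe
        obtain ⟨G', hG', hG'e, hcc⟩ := htrans F hF (by omega) hFe
        have := rmin_le (hsub G' hG')
        exact hT1 G' hG' (by omega) hG'e
      · rintro ⟨hT1, F, hF, hFc, hFe⟩
        obtain ⟨G, hG, hGe, hcc⟩ := htrans F hF (by omega) hFe
        refine ⟨fun G' hG' hc' he' => hT1 G' (hsub G' hG') (by omega) he', G, hG, ?_, hGe⟩
        rcases hcc with h | h
        · omega
        · exact absurd hGe (hT1 G (hsub G hG) (by omega))
end

section
/- In the proof of primal-type preservation: if D is a delta-matroid, e₁ is not a coloop, e₂ ≠ e₁ lies in some minimum feasible set, then there exists a minimum-cardinality feasible set F with e₂ ∈ F and e₁ ∉ F. -/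
/-- If `e₁` is not a coloop of a delta-matroid and `e₂ ≠ e₁` lies in some minimum
feasible set, then some minimum feasible set contains `e₂` but not `e₁`. -/
theorem min_feasible_avoiding {α : Type*} [DecidableEq α] (𝓕 : Finset (Finset α))
    (hne : 𝓕.Nonempty) (hSEA : SEA 𝓕) (e₁ e₂ : α) (h12 : e₂ ≠ e₁)
    (hcoloop : ∃ F ∈ 𝓕, e₁ ∉ F)
    (h2 : ∃ F ∈ 𝓕, F.card = rmin 𝓕 ∧ e₂ ∈ F) :
    ∃ F ∈ 𝓕, F.card = rmin 𝓕 ∧ e₂ ∈ F ∧ e₁ ∉ F := by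
  have hle : ∀ F ∈ 𝓕, rmin 𝓕 ≤ F.card := fun F hF => Nat.sInf_le ⟨F, hF, rfl⟩
  obtain ⟨A, hA, hAcard, hA2⟩ := h2
  by_cases hA1 : e₁ ∈ A
  · obtain ⟨B, hB, hB1⟩ := hcoloop
    have hu : e₁ ∈ symmDiff A B := by
      simp [Finset.mem_symmDiff, hA1, hB1]
    obtain ⟨v, hv, hfeas⟩ := hSEA A hA B hB e₁ hu
    by_cases hvA : v ∈ A
    · exfalso
      have hv1 : v ≠ e₁ := by
        rintro rfl
        have heq : symmDiff A ({v, v} : Finset α) = A.erase v := by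
          ext x
          simp only [Finset.mem_symmDiff, Finset.mem_erase, Finset.mem_insert,
            Finset.mem_singleton, or_self]
          constructor
          · rintro (⟨hxA, hxn⟩ | ⟨rfl, hxn⟩)
            · exact ⟨hxn, hxA⟩
            · exact absurd hA1 hxn
          · rintro ⟨hxn, hxA⟩; exact Or.inl ⟨hxA, hxn⟩
        have := hle _ hfeas
        rw [heq, Finset.card_erase_of_mem hA1, hAcard] at this
        have hpos : 1 ≤ rmin 𝓕 := by
          rw [← hAcard]; exact Finset.card_pos.mpr ⟨v, hA1⟩
        omega
      have hsub : ({e₁, v} : Finset α) ⊆ A := by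
        intro x hx
        rcases Finset.mem_insert.mp hx with rfl | hx
        · exact hA1
        · rw [Finset.mem_singleton.mp hx]; exact hvA
      have heq : symmDiff A ({e₁, v} : Finset α) = A \ {e₁, v} := by
        ext x
        simp only [Finset.mem_symmDiff, Finset.mem_sdiff, Finset.mem_insert,
          Finset.mem_singleton]
        constructor
        · rintro (⟨hxA, hxn⟩ | ⟨hx, hxn⟩)
          · exact ⟨hxA, hxn⟩
          · rcases hx with rfl | rfl
            · exact absurd hA1 hxn
            · exact absurd hvA hxn
        · tauto
      have hcard2 : ({e₁, v} : Finset α).card = 2 := by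
        rw [Finset.card_insert_of_notMem (by simpa using (Ne.symm hv1)),
          Finset.card_singleton]
      have := hle _ hfeas
      rw [heq, Finset.card_sdiff_of_subset hsub, hcard2, hAcard] at this
      have h2le : 2 ≤ rmin 𝓕 := by
        rw [← hAcard]
        have : ({e₁, v} : Finset α).card ≤ A.card := Finset.card_le_card hsub
        omega
      omega
    · -- v ∉ A, so replace e₁ by v
      have hv1 : v ≠ e₁ := fun h => hvA (h ▸ hA1)
      have heq : symmDiff A ({e₁, v} : Finset α) = insert v (A.erase e₁) := by
        ext x
        simp only [Finset.mem_symmDiff, Finset.mem_insert, Finset.mem_erase,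
          Finset.mem_singleton]
        constructor
        · rintro (⟨hxA, hxn⟩ | ⟨hx, hxn⟩)
          · right; exact ⟨fun h => hxn (Or.inl h), hxA⟩
          · rcases hx with rfl | rfl
            · exact absurd hA1 hxn
            · exact Or.inl rfl
        · rintro (rfl | ⟨hx1, hxA⟩)
          · exact Or.inr ⟨Or.inr rfl, hvA⟩
          · exact Or.inl ⟨hxA, by rintro (h | h) <;> [exact hx1 h; exact hvA (h ▸ hxA)]⟩
      refine ⟨_, hfeas, ?_, ?_, ?_⟩
      · rw [heq, Finset.card_insert_of_notMem (fun h => hvA (Finset.mem_of_mem_erase h)),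
          Finset.card_erase_of_mem hA1, hAcard]
        have hpos : 1 ≤ rmin 𝓕 := by
          rw [← hAcard]; exact Finset.card_pos.mpr ⟨e₁, hA1⟩
        omega
      · rw [heq]
        exact Finset.mem_insert.mpr (Or.inr (Finset.mem_erase.mpr ⟨h12, hA2⟩))
      · rw [heq]
        simp [Ne.symm hv1]
  · exact ⟨A, hA, hAcard, hA2, hA1⟩
end
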